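/- Let (U,S) be a strong right action pair in a monoid M, and let u ∈ U. Suppose there exist an element s ∈ S¹, a subset W ⊆ U, and elements s_v ∈ S¹ for each v ∈ W, such that: (1) θ_u = (1,s)^lc; (2) u ≤_R v in U (i.e. u ∈ vU) for all v ∈ W; (3) (1,s_v) ∈ θ_v for all v ∈ W; and (4) s belongs to the submonoid of S¹ generated by {s_v : v ∈ W}. Then θ_u = ⋁_{v∈W} θ_v, the join of the left congruences θ_v (v ∈ W), which coincides with their join as equivalence relations on S¹. -/

import Mathlib

namespace PaperFDP

/-- `σ` is a left congruence on the subset `T` of the monoid `M`. -/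
def IsLeftCongOn {M : Type*} [Monoid M] (T : Set M) (σ : M → M → Prop) : Prop :=
  (∀ a b : M, σ a b → a ∈ T ∧ b ∈ T) ∧ (∀ a ∈ T, σ a a) ∧
    (∀ a b : M, σ a b → σ b a) ∧ (∀ a b c : M, σ a b → σ b c → σ a c) ∧
    (∀ c ∈ T, ∀ a b : M, σ a b → σ (c * a) (c * b))

/-- The least left congruence on `T` containing the set of pairs `P`. -/
def lcGen {M : Type*} [Monoid M] (T : Set M) (P : Set (M × M)) (a b : M) : Prop :=
  ∀ σ : M → M → Prop, IsLeftCongOn T σ → (∀ p ∈ P, σ p.1 p.2) → σ a b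

theorem lcGen_isLeftCongOn {M : Type*} [Monoid M] {T : Set M} {P : Set (M × M)}
    (hTmul : ∀ x ∈ T, ∀ y ∈ T, x * y ∈ T)
    (hP : ∀ p ∈ P, p.1 ∈ T ∧ p.2 ∈ T) :
    IsLeftCongOn T (lcGen T P) := by
  have htriv : IsLeftCongOn T (fun a b => a ∈ T ∧ b ∈ T) :=
    ⟨fun a b h => h, fun a ha => ⟨ha, ha⟩, fun a b h => ⟨h.2, h.1⟩,
     fun a b c h h' => ⟨h.1, h'.2⟩,
     fun c hc a b h => ⟨hTmul c hc a h.1, hTmul c hc b h.2⟩⟩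
  refine ⟨fun a b h => h _ htriv hP, ?_, ?_, ?_, ?_⟩
  · intro a ha σ hσ hσP; exact hσ.2.1 a ha
  · intro a b h σ hσ hσP; exact hσ.2.2.1 a b (h σ hσ hσP)
  · intro a b c h h' σ hσ hσP; exact hσ.2.2.2.1 a b c (h σ hσ hσP) (h' σ hσ hσP)
  · intro c hc a b h σ hσ hσP; exact hσ.2.2.2.2 c hc a b (h σ hσ hσP)

/-- Lemma `lem:bigvee`.  Let `(U,S)` be a strong right action pair
in a monoid `M` and `u ∈ U`.  Suppose `s ∈ S¹ = S ∪ {1}`, `W ⊆ U`, and `s_v ∈ S¹`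
(for `v ∈ W`) satisfy: (1) `θ_u = (1,s)^lc`; (2) `u ≤_R v` in `U` for all `v ∈ W`;
(3) `(1, s_v) ∈ θ_v` for all `v ∈ W`; (4) `s` lies in the submonoid generated by the
`s_v`.  Then `θ_u = ⋁_{v ∈ W} θ_v`, the join of the left congruences `θ_v` on `S¹`,
i.e. the least left congruence on `S¹` containing their union. -/
theorem stmt5 {M : Type*} [Monoid M] (U S : Set M)
    (hU1 : (1 : M) ∈ U) (hUmul : ∀ x ∈ U, ∀ y ∈ U, x * y ∈ U)
    (hSmul : ∀ x ∈ S, ∀ y ∈ S, x * y ∈ S)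
    (hA1 : ∀ s ∈ S, ∀ u ∈ U, ∃ v ∈ U, u * s = s * v)
    (hA2 : ∀ u ∈ U, ∀ v ∈ U, ∀ s ∈ S, ∀ t ∈ S, s * u = t * v → u = v)
    (u : M) (hu : u ∈ U) (s : M) (hs : s ∈ S ∪ {1})
    (W : Set M) (hW : W ⊆ U) (sv : M → M)
    (h1 : ∀ a b : M,
      (a ∈ S ∪ {1} ∧ b ∈ S ∪ {1} ∧ a * u = b * u) ↔ lcGen (S ∪ {1}) {((1 : M), s)} a b)
    (h2 : ∀ v ∈ W, ∃ w ∈ U, u = v * w)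
    (h3 : ∀ v ∈ W, sv v ∈ S ∪ {1} ∧ sv v * v = v)
    (h4 : s ∈ Submonoid.closure (sv '' W)) :
    ∀ a b : M,
      (a ∈ S ∪ {1} ∧ b ∈ S ∪ {1} ∧ a * u = b * u) ↔
        lcGen (S ∪ {1})
          {p : M × M | p.1 ∈ S ∪ {1} ∧ p.2 ∈ S ∪ {1} ∧ ∃ v ∈ W, p.1 * v = p.2 * v} a b := by
  set T : Set M := S ∪ {1} with hTdef
  set P : Set (M × M) :=
    {p : M × M | p.1 ∈ T ∧ p.2 ∈ T ∧ ∃ v ∈ W, p.1 * v = p.2 * v} with hPdef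
  have hT1 : (1 : M) ∈ T := Or.inr rfl
  have hTmul : ∀ x ∈ T, ∀ y ∈ T, x * y ∈ T := by
    rintro x (hx | hx) y (hy | hy)
    · exact Or.inl (hSmul x hx y hy)
    · simp only [Set.mem_singleton_iff] at hy; subst hy; simpa using (show x ∈ T from Or.inl hx)
    · simp only [Set.mem_singleton_iff] at hx; subst hx; simpa using (show y ∈ T from Or.inl hy)
    · simp only [Set.mem_singleton_iff] at hx hy; subst hx; subst hy
      simpa using hT1
  have hPsub : ∀ p ∈ P, p.1 ∈ T ∧ p.2 ∈ T := fun p hp => ⟨hp.1, hp.2.1⟩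
  have C : IsLeftCongOn T (lcGen T P) := lcGen_isLeftCongOn hTmul hPsub
  -- key: (1, s) is in lcGen T P
  have key : lcGen T P 1 s := by
    have main : ∀ x, x ∈ Submonoid.closure (sv '' W) → x ∈ T ∧ lcGen T P 1 x := by
      intro x hx
      induction hx using Submonoid.closure_induction with
      | mem x hx =>
        obtain ⟨v, hvW, rfl⟩ := hx
        obtain ⟨hsvT, hsvv⟩ := h3 v hvW
        refine ⟨hsvT, fun σ hσ hσP => ?_⟩
        exact hσP (1, sv v) ⟨hT1, hsvT, v, hvW, by rw [one_mul, hsvv]⟩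
      | one => exact ⟨hT1, C.2.1 1 hT1⟩
      | mul x y hx hy ihx ihy =>
        refine ⟨hTmul x ihx.1 y ihy.1, ?_⟩
        have h1x : lcGen T P 1 x := ihx.2
        have hxy : lcGen T P x (x * y) := by
          have := C.2.2.2.2 x ihx.1 1 y ihy.2
          rwa [mul_one] at this
        exact C.2.2.2.1 1 x (x * y) h1x hxy
    exact (main s h4).2
  intro a b
  constructor
  · intro hab
    have g : lcGen T {((1 : M), s)} a b := (h1 a b).1 hab
    exact g _ C (by rintro p rfl; exact key)
  · intro h
    have hσ : IsLeftCongOn T (fun a b => a ∈ T ∧ b ∈ T ∧ a * u = b * u) := by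
      refine ⟨fun a b h => ⟨h.1, h.2.1⟩, fun a ha => ⟨ha, ha, rfl⟩,
        fun a b h => ⟨h.2.1, h.1, h.2.2.symm⟩,
        fun a b c h h' => ⟨h.1, h'.2.1, h.2.2.trans h'.2.2⟩,
        fun c hc a b h => ⟨hTmul c hc a h.1, hTmul c hc b h.2.1, ?_⟩⟩
      rw [mul_assoc, mul_assoc, h.2.2]
    refine h _ hσ ?_
    rintro ⟨p1, p2⟩ ⟨hp1, hp2, v, hvW, hpv⟩
    obtain ⟨w, hwU, hwu⟩ := h2 v hvW
    exact ⟨hp1, hp2, by rw [hwu, ← mul_assoc, ← mul_assoc, hpv]⟩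

end PaperFDP
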